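/- For arbitrary ū_h ∈ U, ȳ_h ∈ Y, w̄_h ∈ W define the residuals ρ_w := C*(Cȳ_h − g^δ) + A*w̄_h ∈ Y*, ρ_u := αū_h − B*w̄_h ∈ U, and ρ_y := Aȳ_h − Bū_h ∈ W*. Then J_α(ū_h, ȳ_h) − J_α(ū, ȳ) ≤ (1/(2α))‖B*((A*)⁻¹ρ_w) + ρ_u‖_U² + (Cȳ_h − g^δ, C(A⁻¹ρ_y))_G. -/

import Mathlib

open RealInnerProductSpace NormedSpace

/-- A posteriori estimate for the Tikhonov functional value error for Hilbert-space
regularization of a PDE-constrained problem. -/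
theorem stmt_4
    {U G Y W : Type*}
    [NormedAddCommGroup U] [InnerProductSpace ℝ U] [CompleteSpace U]
    [NormedAddCommGroup G] [InnerProductSpace ℝ G] [CompleteSpace G]
    [NormedAddCommGroup Y] [NormedSpace ℝ Y] [CompleteSpace Y]
    [NormedAddCommGroup W] [NormedSpace ℝ W] [CompleteSpace W]
    (A : Y ≃L[ℝ] StrongDual ℝ W) (Astar : W ≃L[ℝ] StrongDual ℝ Y)
    (hAadj : ∀ (y : Y) (w : W), A y w = Astar w y)
    (B : U →L[ℝ] StrongDual ℝ W) (Bstar : W →L[ℝ] U)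
    (hBadj : ∀ (u : U) (w : W), B u w = ⟪u, Bstar w⟫)
    (C : Y →L[ℝ] G) (Cstar : G →L[ℝ] StrongDual ℝ Y)
    (hCadj : ∀ (y : Y) (g : G), ⟪C y, g⟫ = Cstar g y)
    (gδ : G) (α : ℝ) (hα : 0 < α)
    (Jα : U → Y → ℝ)
    (hJ : ∀ u y, Jα u y = (1/2) * ‖C y - gδ‖^2 + (α/2) * ‖u‖^2)
    (ubar : U) (ybar : Y) (hybar : ybar = A.symm (B ubar))
    (hmin : ∀ u : U, Jα ubar ybar ≤ Jα u (A.symm (B u)))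
    (uh : U) (yh : Y) (wh : W) :
    Jα uh yh - Jα ubar ybar ≤
      (1/(2*α)) * ‖Bstar (Astar.symm (Cstar (C yh - gδ) + Astar wh)) + (α • uh - Bstar wh)‖^2
      + ⟪C yh - gδ, C (A.symm (A yh - B uh))⟫ := by
  have h2α : (0:ℝ) < 2*α := by linarith
  rw [hJ uh yh, hJ ubar ybar, hybar]
  set a : G := C yh - gδ with ha
  set p : U := uh - ubar with hp
  set b : G := C (A.symm (B uh)) - gδ with hb
  set q : G := C (A.symm (B p)) with hq
  set s : U := Bstar (Astar.symm (Cstar a)) with hs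
  set e : U := s + α • uh with he
  -- adjoint identity for the reduced forward operator
  have hT : ∀ (u : U) (g : G),
      ⟪C (A.symm (B u)), g⟫ = ⟪u, Bstar (Astar.symm (Cstar g))⟫ := by
    intro u g
    rw [hCadj]
    have h := hAadj (A.symm (B u)) (Astar.symm (Cstar g))
    rw [A.apply_symm_apply, Astar.apply_symm_apply] at h
    rw [← h, hBadj]
  have hqa : ⟪q, a⟫ = ⟪p, s⟫ := by rw [hq, hs]; exact hT p a
  have hE : Bstar (Astar.symm (Cstar a + Astar wh)) + (α • uh - Bstar wh) = e := by
    rw [map_add, Astar.symm_apply_apply, map_add, he, hs]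
    abel
  have hab : C (A.symm (A yh - B uh)) = a - b := by
    rw [map_sub, map_sub, A.symm_apply_apply, ha, hb]
    abel
  have hq' : q = C (A.symm (B uh)) - C (A.symm (B ubar)) := by
    rw [hq, hp, map_sub, map_sub, map_sub]
  have hbq : C (A.symm (B ubar)) - gδ = b - q := by
    rw [hq', hb]; abel
  have hub : ubar = uh - p := by rw [hp]; abel
  clear_value a p b q s e
  have n1eq : ‖a - b + q‖^2
      = ‖a‖^2 - 2*⟪a,b⟫ + ‖b‖^2 + 2*⟪a,q⟫ - 2*⟪b,q⟫ + ‖q‖^2 := by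
    rw [norm_add_sq_real, norm_sub_sq_real, inner_sub_left]
    ring
  have g4 : ⟪e, p⟫ = ⟪a,q⟫ + α*⟪uh,p⟫ := by
    rw [he, inner_add_left, real_inner_smul_left, real_inner_comm p s, ← hqa,
      real_inner_comm a q]
  have n2eq : ‖e - α • p‖^2 = ‖e‖^2 - 2*α*(⟪a,q⟫ + α*⟪uh,p⟫) + α^2*‖p‖^2 := by
    rw [norm_sub_sq_real, real_inner_smul_right, norm_smul, mul_pow, Real.norm_eq_abs, sq_abs, g4]
    ring
  have i1' : (0:ℝ) ≤ ‖a‖^2 - 2*⟪a,b⟫ + ‖b‖^2 + 2*⟪a,q⟫ - 2*⟪b,q⟫ + ‖q‖^2 := by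
    rw [← n1eq]; exact sq_nonneg _
  have i2' : (0:ℝ) ≤ ‖e‖^2 - 2*α*(⟪a,q⟫ + α*⟪uh,p⟫) + α^2*‖p‖^2 := by
    rw [← n2eq]; exact sq_nonneg _
  have g1 : ‖b - q‖^2 = ‖b‖^2 - 2*⟪b,q⟫ + ‖q‖^2 := norm_sub_sq_real b q
  have g2 : ‖ubar‖^2 = ‖uh‖^2 - 2*⟪uh,p⟫ + ‖p‖^2 := by
    rw [hub]; exact norm_sub_sq_real uh p
  have g3 : ⟪a, a - b⟫ = ‖a‖^2 - ⟪a,b⟫ := by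
    rw [inner_sub_right, real_inner_self_eq_norm_sq]
  rw [hE, hab, hbq, g1, g2, g3]
  rw [← sub_le_iff_le_add]
  have hdiv : (1:ℝ)/(2*α) * ‖e‖^2 = ‖e‖^2 / (2*α) := by ring
  rw [hdiv, le_div_iff₀ h2α]
  set_option maxHeartbeats 1000000 in
  linarith [mul_nonneg hα.le i1', i2']
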